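/- arXiv:2001.03720 — 2 statements merged into one kernel-verified Lean document; each statement's English description precedes it below -/
import Mathlib

section
/- Let 1 ≤ p ≤ ∞ and equip ℝ³ with the ℓ_p norm. Then every bounded set X in this three-dimensional ℓ_p space with positive ℓ_p-diameter can be written as a union of 8 subsets, each of ℓ_p-diameter strictly smaller than the ℓ_p-diameter of X. -/
open scoped NNReal

section
variable {α : Type*}


private lemma abs_add_abs_le' {a b c : ℝ} (h1 : |a + b| ≤ c) (h2 : |a - b| ≤ c) :
    |a| + |b| ≤ c := by
  rcases abs_cases a with ⟨ea, _⟩ | ⟨ea, _⟩ <;> rcases abs_cases b with ⟨eb, _⟩ | ⟨eb, _⟩ <;>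
    rw [ea, eb] <;>
    linarith [(abs_le.1 h1).1, (abs_le.1 h1).2, (abs_le.1 h2).1, (abs_le.1 h2).2]

private lemma real_add_rpow {a b P : ℝ} (ha : 0 ≤ a) (hb : 0 ≤ b) (hP : 1 ≤ P) :
    a ^ P + b ^ P ≤ (a + b) ^ P := by
  have h := NNReal.add_rpow_le_rpow_add a.toNNReal b.toNNReal hP
  have h' := NNReal.coe_le_coe.2 h
  simpa [NNReal.coe_rpow, Real.coe_toNNReal a ha, Real.coe_toNNReal b hb] using h'

private lemma real_rpow_add_le {a b P : ℝ} (ha : 0 ≤ a) (hb : 0 ≤ b) (hP : 1 ≤ P) :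
    (a + b) ^ P ≤ 2 ^ (P - 1) * (a ^ P + b ^ P) := by
  have h := NNReal.rpow_add_le_mul_rpow_add_rpow a.toNNReal b.toNNReal hP
  have h' := NNReal.coe_le_coe.2 h
  simpa [NNReal.coe_rpow, NNReal.coe_mul, Real.coe_toNNReal a ha, Real.coe_toNNReal b hb] using h'

private lemma cap_est {A B C A' B' C' t0 dd : ℝ}
    (hx : |A| + |B| + |C| ≤ dd/2) (hy : |A'| + |B'| + |C'| ≤ dd/2)
    (hxA : t0 ≤ A) (hyA : t0 ≤ A') :
    |A - A'| + |B - B'| + |C - C'| ≤ 3*(dd/2) - 3*t0 := by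
  have h1 : |A - A'| ≤ dd/2 - t0 := by
    apply abs_le.2
    constructor
    all_goals linarith [le_abs_self A, abs_nonneg B, abs_nonneg C,
      le_abs_self A', abs_nonneg B', abs_nonneg C']
  have h2 : |B - B'| ≤ |B| + |B'| := abs_sub B B'
  have h3 : |C - C'| ≤ |C| + |C'| := abs_sub C C'
  linarith [le_abs_self A, le_abs_self A']

private lemma mid_est {A B C A' B' C' t0 : ℝ}
    (hA : |A| ≤ t0) (hB : |B| ≤ t0) (hC : |C| ≤ t0)
    (hA' : |A'| ≤ t0) (hB' : |B'| ≤ t0) (hC' : |C'| ≤ t0)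
    (hsx : 0 ≤ A) (hsy : 0 ≤ A') :
    |A - A'| + |B - B'| + |C - C'| ≤ 5 * t0 := by
  have h1 : |A - A'| ≤ t0 := by
    apply abs_le.2
    constructor
    all_goals linarith [le_abs_self A, le_abs_self A']
  have h2 : |B - B'| ≤ |B| + |B'| := abs_sub B B'
  have h3 : |C - C'| ≤ |C| + |C'| := abs_sub C C'
  linarith

private lemma ball_partition {α : Type*} (X : Set α) (g : Fin 3 → α → ℝ) (dd : ℝ) (hdd : 0 < dd)
    (hball : ∀ x ∈ X, |g 0 x| + |g 1 x| + |g 2 x| ≤ dd/2) :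
    ∃ Y : Fin 8 → Set α, X = ⋃ k, Y k ∧
      ∀ k, ∀ x ∈ Y k, ∀ y ∈ Y k, x ∈ X ∧ y ∈ X ∧
        |g 0 x - g 0 y| + |g 1 x - g 1 y| + |g 2 x - g 2 y| ≤ 15/16 * dd := by
  classical
  set t0 := 3/16 * dd with ht0
  let S : ℕ → Set α := fun n =>
    match n with
    | 0 => {x | x ∈ X ∧ t0 ≤ g 0 x}
    | 1 => {x | x ∈ X ∧ t0 ≤ -g 0 x}
    | 2 => {x | x ∈ X ∧ t0 ≤ g 1 x}
    | 3 => {x | x ∈ X ∧ t0 ≤ -g 1 x}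
    | 4 => {x | x ∈ X ∧ t0 ≤ g 2 x}
    | 5 => {x | x ∈ X ∧ t0 ≤ -g 2 x}
    | 6 => {x | x ∈ X ∧ |g 0 x| ≤ t0 ∧ |g 1 x| ≤ t0 ∧ |g 2 x| ≤ t0 ∧ 0 ≤ g 0 x}
    | _ => {x | x ∈ X ∧ |g 0 x| ≤ t0 ∧ |g 1 x| ≤ t0 ∧ |g 2 x| ≤ t0 ∧ g 0 x ≤ 0}
  refine ⟨fun k => S k.val, ?_, ?_⟩
  · apply Set.eq_of_subset_of_subset
    · intro x hx
      rcases le_or_gt t0 (g 0 x) with h0 | h0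
      · exact Set.mem_iUnion.2 ⟨0, hx, h0⟩
      rcases le_or_gt t0 (-g 0 x) with h0' | h0'
      · exact Set.mem_iUnion.2 ⟨1, hx, h0'⟩
      rcases le_or_gt t0 (g 1 x) with h1 | h1
      · exact Set.mem_iUnion.2 ⟨2, hx, h1⟩
      rcases le_or_gt t0 (-g 1 x) with h1' | h1'
      · exact Set.mem_iUnion.2 ⟨3, hx, h1'⟩
      rcases le_or_gt t0 (g 2 x) with h2 | h2
      · exact Set.mem_iUnion.2 ⟨4, hx, h2⟩
      rcases le_or_gt t0 (-g 2 x) with h2' | h2'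
      · exact Set.mem_iUnion.2 ⟨5, hx, h2'⟩
      have e0 : |g 0 x| ≤ t0 := abs_le.2 ⟨by linarith, by linarith⟩
      have e1 : |g 1 x| ≤ t0 := abs_le.2 ⟨by linarith, by linarith⟩
      have e2 : |g 2 x| ≤ t0 := abs_le.2 ⟨by linarith, by linarith⟩
      rcases le_total 0 (g 0 x) with hs | hs
      · exact Set.mem_iUnion.2 ⟨6, hx, e0, e1, e2, hs⟩
      · exact Set.mem_iUnion.2 ⟨7, hx, e0, e1, e2, hs⟩
    · intro x hx
      obtain ⟨k, hk⟩ := Set.mem_iUnion.1 hx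
      fin_cases k <;> exact hk.1
  · intro k x hxk y hyk
    have key : x ∈ X ∧ y ∈ X ∧
        |g 0 x - g 0 y| + |g 1 x - g 1 y| + |g 2 x - g 2 y| ≤ 15/16 * dd := by
      fin_cases k
      · obtain ⟨hxX, hx0⟩ := hxk
        obtain ⟨hyX, hy0⟩ := hyk
        refine ⟨hxX, hyX, ?_⟩
        have := cap_est (hball x hxX) (hball y hyX) hx0 hy0
        linarith
      · obtain ⟨hxX, hx0⟩ := hxk
        obtain ⟨hyX, hy0⟩ := hyk
        refine ⟨hxX, hyX, ?_⟩
        have hx' : |-g 0 x| + |g 1 x| + |g 2 x| ≤ dd/2 := by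
          rw [abs_neg]; exact hball x hxX
        have hy' : |-g 0 y| + |g 1 y| + |g 2 y| ≤ dd/2 := by
          rw [abs_neg]; exact hball y hyX
        have := cap_est hx' hy' hx0 hy0
        have he : |-g 0 x - -g 0 y| = |g 0 x - g 0 y| := by
          rw [show -g 0 x - -g 0 y = -(g 0 x - g 0 y) by ring, abs_neg]
        rw [he] at this
        linarith
      · obtain ⟨hxX, hx0⟩ := hxk
        obtain ⟨hyX, hy0⟩ := hyk
        refine ⟨hxX, hyX, ?_⟩
        have hx' : |g 1 x| + |g 0 x| + |g 2 x| ≤ dd/2 := by linarith [hball x hxX]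
        have hy' : |g 1 y| + |g 0 y| + |g 2 y| ≤ dd/2 := by linarith [hball y hyX]
        have := cap_est hx' hy' hx0 hy0
        linarith
      · obtain ⟨hxX, hx0⟩ := hxk
        obtain ⟨hyX, hy0⟩ := hyk
        refine ⟨hxX, hyX, ?_⟩
        have hx' : |-g 1 x| + |g 0 x| + |g 2 x| ≤ dd/2 := by
          rw [abs_neg]; linarith [hball x hxX]
        have hy' : |-g 1 y| + |g 0 y| + |g 2 y| ≤ dd/2 := by
          rw [abs_neg]; linarith [hball y hyX]
        have := cap_est hx' hy' hx0 hy0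
        have he : |-g 1 x - -g 1 y| = |g 1 x - g 1 y| := by
          rw [show -g 1 x - -g 1 y = -(g 1 x - g 1 y) by ring, abs_neg]
        rw [he] at this
        linarith
      · obtain ⟨hxX, hx0⟩ := hxk
        obtain ⟨hyX, hy0⟩ := hyk
        refine ⟨hxX, hyX, ?_⟩
        have hx' : |g 2 x| + |g 0 x| + |g 1 x| ≤ dd/2 := by linarith [hball x hxX]
        have hy' : |g 2 y| + |g 0 y| + |g 1 y| ≤ dd/2 := by linarith [hball y hyX]
        have := cap_est hx' hy' hx0 hy0
        linarith
      · obtain ⟨hxX, hx0⟩ := hxk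
        obtain ⟨hyX, hy0⟩ := hyk
        refine ⟨hxX, hyX, ?_⟩
        have hx' : |-g 2 x| + |g 0 x| + |g 1 x| ≤ dd/2 := by
          rw [abs_neg]; linarith [hball x hxX]
        have hy' : |-g 2 y| + |g 0 y| + |g 1 y| ≤ dd/2 := by
          rw [abs_neg]; linarith [hball y hyX]
        have := cap_est hx' hy' hx0 hy0
        have he : |-g 2 x - -g 2 y| = |g 2 x - g 2 y| := by
          rw [show -g 2 x - -g 2 y = -(g 2 x - g 2 y) by ring, abs_neg]
        rw [he] at this
        linarith
      · obtain ⟨hxX, ex0, ex1, ex2, hsx⟩ := hxk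
        obtain ⟨hyX, ey0, ey1, ey2, hsy⟩ := hyk
        refine ⟨hxX, hyX, ?_⟩
        have := mid_est ex0 ex1 ex2 ey0 ey1 ey2 hsx hsy
        linarith
      · obtain ⟨hxX, ex0, ex1, ex2, hsx⟩ := hxk
        obtain ⟨hyX, ey0, ey1, ey2, hsy⟩ := hyk
        refine ⟨hxX, hyX, ?_⟩
        have hsx' : 0 ≤ -g 0 x := by linarith
        have hsy' : 0 ≤ -g 0 y := by linarith
        have ex0' : |-g 0 x| ≤ t0 := by rw [abs_neg]; exact ex0
        have ey0' : |-g 0 y| ≤ t0 := by rw [abs_neg]; exact ey0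
        have := mid_est ex0' ex1 ex2 ey0' ey1 ey2 hsx' hsy'
        have he : |-g 0 x - -g 0 y| = |g 0 x - g 0 y| := by
          rw [show -g 0 x - -g 0 y = -(g 0 x - g 0 y) by ring, abs_neg]
        rw [he] at this
        linarith
    exact key


private lemma halve_exists (X : Set α) (hne : X.Nonempty) (f : α → ℝ) (r : ℝ)
    (hr : ∀ x ∈ X, ∀ y ∈ X, f x - f y ≤ r) :
    ∃ c : ℝ, ∀ x ∈ X, ∀ y ∈ X,
      ((f x ≤ c ∧ f y ≤ c) ∨ (c ≤ f x ∧ c ≤ f y)) → |f x - f y| ≤ r / 2 := by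
  obtain ⟨x0, hx0⟩ := hne
  have hbdd : BddBelow (f '' X) := ⟨f x0 - r, by rintro z ⟨y, hy, rfl⟩; linarith [hr x0 hx0 y hy]⟩
  have hbne : (f '' X).Nonempty := ⟨f x0, ⟨x0, hx0, rfl⟩⟩
  set m := sInf (f '' X) with hm
  have hlow : ∀ x ∈ X, m ≤ f x := fun x hx => csInf_le hbdd ⟨x, hx, rfl⟩
  have hupp : ∀ x ∈ X, f x ≤ m + r := by
    intro x hx
    have : f x - r ≤ m := le_csInf hbne (by rintro z ⟨y, hy, rfl⟩; linarith [hr x hx y hy])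
    linarith
  refine ⟨m + r / 2, ?_⟩
  rintro x hx y hy (⟨h1, h2⟩ | ⟨h1, h2⟩) <;>
    rw [abs_le] <;> constructor <;> linarith [hlow x hx, hlow y hy, hupp x hx, hupp y hy]

private lemma partition8' (X : Set α) (hne : X.Nonempty) (f : Fin 3 → α → ℝ) (r : Fin 3 → ℝ)
    (hr : ∀ i, ∀ x ∈ X, ∀ y ∈ X, f i x - f i y ≤ r i) :
    ∃ Y : Fin 8 → Set α, X = ⋃ k, Y k ∧
      ∀ k, ∀ x ∈ Y k, ∀ y ∈ Y k, x ∈ X ∧ y ∈ X ∧ ∀ i, |f i x - f i y| ≤ r i / 2 := by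
  classical
  choose c hc using fun i => halve_exists X hne (f i) (r i) (hr i)
  set e : (Fin 3 → Fin 2) ≃ Fin 8 := finFunctionFinEquiv
  refine ⟨fun k => {x ∈ X | ∀ i, if e.symm k i = 0 then f i x ≤ c i else c i ≤ f i x}, ?_, ?_⟩
  · apply Set.eq_of_subset_of_subset
    · intro x hx
      refine Set.mem_iUnion.2 ⟨e fun i => if f i x ≤ c i then 0 else 1, hx, ?_⟩
      intro i
      rw [Equiv.symm_apply_apply]
      by_cases h : f i x ≤ c i <;> simp [h] <;> exact le_of_not_ge h
    · exact Set.iUnion_subset fun k x hx => hx.1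
  · rintro k x ⟨hxX, hxk⟩ y ⟨hyX, hyk⟩
    refine ⟨hxX, hyX, fun i => ?_⟩
    apply hc i x hxX y hyX
    have h1 := hxk i; have h2 := hyk i
    by_cases h : e.symm k i = 0
    · rw [if_pos h] at h1 h2; exact Or.inl ⟨h1, h2⟩
    · rw [if_neg h] at h1 h2; exact Or.inr ⟨h1, h2⟩

end

/-- Yu–Zong: in the three-dimensional ℓ_p space (1 ≤ p ≤ ∞), every bounded set of
positive diameter can be written as a union of 8 subsets, each of ℓ_p-diameter
strictly smaller than that of X. -/
theorem borsuk_lp_three_dim (p : ENNReal) [Fact (1 ≤ p)]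
    (X : Set (PiLp p (fun _ : Fin 3 => ℝ))) (hX : Bornology.IsBounded X)
    (hd : 0 < Metric.diam X) :
    ∃ Y : Fin 8 → Set (PiLp p (fun _ : Fin 3 => ℝ)),
      X = ⋃ i, Y i ∧ ∀ i, Metric.diam (Y i) < Metric.diam X := by
  classical
  set d := Metric.diam X with hd_def
  have hne : X.Nonempty := by
    rcases X.eq_empty_or_nonempty with h | h
    · rw [h] at hd_def; simp [Metric.diam_empty] at hd_def; rw [hd_def] at hd; exact absurd hd (lt_irrefl 0)
    · exact h
  have hdle : ∀ x ∈ X, ∀ y ∈ X, dist x y ≤ d := fun x hx y hy =>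
    Metric.dist_le_diam_of_mem hX hx hy
  by_cases hptop : p = ⊤
  · subst hptop
    have hco : ∀ (x y : PiLp ⊤ (fun _ : Fin 3 => ℝ)) (i : Fin 3), |x i - y i| ≤ dist x y := by
      intro x y i
      rw [PiLp.dist_eq_iSup, ← Real.dist_eq]
      exact le_ciSup (f := fun j => dist (x j) (y j))
        (Set.Finite.bddAbove (Set.finite_range _)) i
    obtain ⟨Y, hY, hprop⟩ := partition8' X hne (fun i x => x i) (fun _ => d)
      (fun i x hx y hy => le_trans (le_abs_self _) (le_trans (hco x y i) (hdle x hx y hy)))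
    refine ⟨Y, hY, fun k => lt_of_le_of_lt ?_ (half_lt_self hd)⟩
    apply Metric.diam_le_of_forall_dist_le (by positivity)
    intro x hx y hy
    obtain ⟨hxX, hyX, hosc⟩ := hprop k x hx y hy
    rw [PiLp.dist_eq_iSup]
    refine ciSup_le fun i => ?_
    rw [Real.dist_eq]
    exact hosc i
  · set P := p.toReal with hPdef
    have hp1' : (1 : ENNReal) ≤ p := Fact.out
    have hP_pos : 0 < P := ENNReal.toReal_pos (by intro h; rw [h] at hp1'; simp at hp1') hptop
    have hP1 : 1 ≤ P := by
      have := ENNReal.toReal_mono hptop hp1'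
      simpa using this
    have hdist_eq : ∀ x y : PiLp p (fun _ : Fin 3 => ℝ),
        dist x y = (|x 0 - y 0| ^ P + |x 1 - y 1| ^ P + |x 2 - y 2| ^ P) ^ (1 / P) := by
      intro x y
      rw [PiLp.dist_eq_sum hP_pos]
      simp only [Fin.sum_univ_three, Real.dist_eq]
      rfl
    have hdistP' : ∀ x y : PiLp p (fun _ : Fin 3 => ℝ),
        dist x y ^ P = ∑ i, |x i - y i| ^ P := by
      intro x y
      rw [PiLp.dist_eq_sum hP_pos, one_div]
      simp only [Real.dist_eq]
      exact Real.rpow_inv_rpow (by positivity) (ne_of_gt hP_pos)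
    have hdistP : ∀ x y : PiLp p (fun _ : Fin 3 => ℝ),
        dist x y ^ P = |x 0 - y 0| ^ P + |x 1 - y 1| ^ P + |x 2 - y 2| ^ P := by
      intro x y
      rw [hdistP']
      simp [Fin.sum_univ_three]
    have hco : ∀ (x y : PiLp p (fun _ : Fin 3 => ℝ)) (i : Fin 3), |x i - y i| ≤ dist x y := by
      intro x y i
      have h1 : |x i - y i| ^ P ≤ dist x y ^ P := by
        rw [hdistP']
        exact Finset.single_le_sum (f := fun j => |x j - y j| ^ P)
          (fun j _ => by positivity) (Finset.mem_univ i)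
      by_contra hcon
      push_neg at hcon
      have := Real.rpow_lt_rpow dist_nonneg hcon hP_pos
      linarith
    by_cases hp1 : p = 1
    · -- p = 1
      have hP1' : P = 1 := by rw [hPdef, hp1]; simp
      have hdist1 : ∀ x y : PiLp p (fun _ : Fin 3 => ℝ),
          dist x y = |x 0 - y 0| + |x 1 - y 1| + |x 2 - y 2| := by
        intro x y
        rw [hdist_eq, hP1']
        simp [Real.rpow_one]
      have hKc : IsCompact (closure X) := hX.isCompact_closure
      have hKne : (closure X).Nonempty := hne.closure
      have hcont : Continuous fun x : PiLp p (fun _ : Fin 3 => ℝ) => x 0 := by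
        have hl : LipschitzWith 1 fun x : PiLp p (fun _ : Fin 3 => ℝ) => x 0 := by
          apply LipschitzWith.of_dist_le_mul
          intro x y
          rw [NNReal.coe_one, one_mul, Real.dist_eq]
          exact hco x y 0
        exact hl.continuous
      have hFc : Continuous fun q :
          (PiLp p (fun _ : Fin 3 => ℝ)) × (PiLp p (fun _ : Fin 3 => ℝ)) => |q.1 0 - q.2 0| :=
        continuous_abs.comp ((hcont.comp continuous_fst).sub (hcont.comp continuous_snd))
      obtain ⟨⟨a, b⟩, habK, hmax⟩ :=
        (hKc.prod hKc).exists_isMaxOn (hKne.prod hKne) hFc.continuousOn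
      have haK : a ∈ closure X := habK.1
      have hbK : b ∈ closure X := habK.2
      have hdcl : ∀ w ∈ closure X, ∀ z ∈ closure X, dist w z ≤ d := by
        intro w hw z hz
        have := Metric.dist_le_diam_of_mem hX.closure hw hz
        rwa [Metric.diam_closure] at this
      set R := |a 0 - b 0| with hR
      have hR0 : 0 ≤ R := abs_nonneg _
      have hRd : R ≤ d := (hco a b 0).trans (hdcl a haK b hbK)
      have hmax' : ∀ x ∈ X, ∀ y ∈ X, |x 0 - y 0| ≤ R := fun x hx y hy =>
        hmax (Set.mk_mem_prod (subset_closure hx) (subset_closure hy))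
      rcases lt_or_eq_of_le hRd with hRlt | hReq
      · -- the x-coordinate range of X is < d : cut by x 0, x 1 + x 2, x 1 - x 2
        have hr : ∀ i, ∀ x ∈ X, ∀ y ∈ X,
            (![fun x : PiLp p (fun _ : Fin 3 => ℝ) => x 0, fun x => x 1 + x 2,
              fun x => x 1 - x 2] : Fin 3 → _ → ℝ) i x -
            (![fun x : PiLp p (fun _ : Fin 3 => ℝ) => x 0, fun x => x 1 + x 2,
              fun x => x 1 - x 2] : Fin 3 → _ → ℝ) i y ≤ (![R, d, d] : Fin 3 → ℝ) i := by
          intro i x hx y hy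
          have h := hdle x hx y hy
          rw [hdist1 x y] at h
          fin_cases i <;>
            simp only [Matrix.cons_val_zero, Matrix.cons_val_one, Matrix.head_cons,
              Matrix.cons_val_two, Matrix.tail_cons]
          · exact (le_abs_self _).trans (hmax' x hx y hy)
          · calc x 1 + x 2 - (y 1 + y 2) = (x 1 - y 1) + (x 2 - y 2) := by ring
              _ ≤ |x 1 - y 1| + |x 2 - y 2| := add_le_add (le_abs_self _) (le_abs_self _)
              _ ≤ d := by linarith [abs_nonneg (x 0 - y 0)]
          · calc x 1 - x 2 - (y 1 - y 2) = (x 1 - y 1) - (x 2 - y 2) := by ring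
              _ ≤ |x 1 - y 1| + |x 2 - y 2| := by
                  linarith [le_abs_self (x 1 - y 1), neg_abs_le (x 2 - y 2)]
              _ ≤ d := by linarith [abs_nonneg (x 0 - y 0)]
        obtain ⟨Y, hY, hprop⟩ := partition8' X hne _ _ hr
        have hd'lt : R/2 + d/2 < d := by linarith
        refine ⟨Y, hY, fun k => lt_of_le_of_lt ?_ hd'lt⟩
        apply Metric.diam_le_of_forall_dist_le (by linarith)
        intro x hx y hy
        obtain ⟨hxX, hyX, hosc⟩ := hprop k x hx y hy
        have h0 := hosc 0
        have h1 := hosc 1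
        have h2 := hosc 2
        simp only [Matrix.cons_val_zero, Matrix.cons_val_one, Matrix.head_cons,
          Matrix.cons_val_two, Matrix.tail_cons] at h0 h1 h2
        have hAB : |x 1 - y 1| + |x 2 - y 2| ≤ d / 2 := by
          apply abs_add_abs_le' (a := x 1 - y 1) (b := x 2 - y 2)
          · convert h1 using 2
            ring
          · convert h2 using 2
            ring
        rw [hdist1 x y]
        linarith
      · -- the x-coordinate range of X equals d : X lies in a ball of radius d/2
        obtain ⟨u, v, huK, hvK, huv⟩ :
            ∃ u v, u ∈ closure X ∧ v ∈ closure X ∧ u 0 - v 0 = d := by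
          have h2 : |a 0 - b 0| = d := by rw [← hR, hReq]
          rcases abs_cases (a 0 - b 0) with ⟨h, _⟩ | ⟨h, _⟩
          · exact ⟨a, b, haK, hbK, by linarith⟩
          · exact ⟨b, a, hbK, haK, by linarith⟩
        have hduv : dist u v ≤ d := hdcl u huK v hvK
        rw [hdist1 u v] at hduv
        have h00 : |u 0 - v 0| = d := by rw [huv, abs_of_pos hd]
        rw [h00] at hduv
        have h11 : u 1 = v 1 := by
          have e : |u 1 - v 1| = 0 :=
            le_antisymm (by linarith [abs_nonneg (u 2 - v 2)]) (abs_nonneg _)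
          have := abs_eq_zero.1 e
          linarith
        have h22 : u 2 = v 2 := by
          have e : |u 2 - v 2| = 0 :=
            le_antisymm (by linarith [abs_nonneg (u 1 - v 1)]) (abs_nonneg _)
          have := abs_eq_zero.1 e
          linarith
        have hball : ∀ x ∈ X, |x 0 - (v 0 + d/2)| + |x 1 - u 1| + |x 2 - u 2| ≤ d/2 := by
          intro x hx
          have hxu := hdcl x (subset_closure hx) u huK
          have hxv := hdcl x (subset_closure hx) v hvK
          rw [hdist1 x u] at hxu
          rw [hdist1 x v, ← h11, ← h22] at hxv
          have f1 : u 0 - x 0 ≤ |x 0 - u 0| := by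
            rw [abs_sub_comm]
            exact le_abs_self _
          have f2 : x 0 - v 0 ≤ |x 0 - v 0| := le_abs_self _
          have habs : |x 0 - (v 0 + d/2)| ≤ d/2 - (|x 1 - u 1| + |x 2 - u 2|) := by
            apply abs_le.2
            constructor
            · linarith
            · linarith
          linarith
        have hb : ∀ x ∈ X,
            |(![fun x : PiLp p (fun _ : Fin 3 => ℝ) => x 0 - (v 0 + d/2),
               fun x => x 1 - u 1, fun x => x 2 - u 2] : Fin 3 → _ → ℝ) 0 x| +
            |(![fun x : PiLp p (fun _ : Fin 3 => ℝ) => x 0 - (v 0 + d/2),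
               fun x => x 1 - u 1, fun x => x 2 - u 2] : Fin 3 → _ → ℝ) 1 x| +
            |(![fun x : PiLp p (fun _ : Fin 3 => ℝ) => x 0 - (v 0 + d/2),
               fun x => x 1 - u 1, fun x => x 2 - u 2] : Fin 3 → _ → ℝ) 2 x| ≤ d/2 := by
          intro x hx
          simp only [Matrix.cons_val_zero, Matrix.cons_val_one, Matrix.head_cons,
            Matrix.cons_val_two, Matrix.tail_cons]
          exact hball x hx
        obtain ⟨Y, hY, hprop⟩ := ball_partition X _ d hd hb
        refine ⟨Y, hY, fun k => lt_of_le_of_lt ?_ (show 15/16*d < d by linarith)⟩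
        apply Metric.diam_le_of_forall_dist_le (by linarith)
        intro x hx y hy
        obtain ⟨hxX, hyX, hkey⟩ := hprop k x hx y hy
        simp only [Matrix.cons_val_zero, Matrix.cons_val_one, Matrix.head_cons,
          Matrix.cons_val_two, Matrix.tail_cons] at hkey
        have r0 : |x 0 - (v 0 + d/2) - (y 0 - (v 0 + d/2))| = |x 0 - y 0| := by
          rw [show x 0 - (v 0 + d/2) - (y 0 - (v 0 + d/2)) = x 0 - y 0 by ring]
        have r1 : |x 1 - u 1 - (y 1 - u 1)| = |x 1 - y 1| := by
          rw [show x 1 - u 1 - (y 1 - u 1) = x 1 - y 1 by ring]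
        have r2 : |x 2 - u 2 - (y 2 - u 2)| = |x 2 - y 2| := by
          rw [show x 2 - u 2 - (y 2 - u 2) = x 2 - y 2 by ring]
        rw [r0, r1, r2] at hkey
        rw [hdist1 x y]
        linarith

    · -- case 1 < p < ∞ : cut by x 0, x 1 + x 2, x 1 - x 2
      have hPgt : 1 < P := by
        have hlt : (1 : ENNReal) < p := lt_of_le_of_ne hp1' (Ne.symm hp1)
        have := (ENNReal.toReal_lt_toReal (by simp) hptop).2 hlt
        simpa using this
      have h2P : (0 : ℝ) < 2 := two_pos
      set G := (2 : ℝ) ^ (1 - 1/P) * d with hG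
      have hG0 : 0 ≤ G := by positivity
      have hGP : G ^ P = 2 ^ (P - 1) * d ^ P := by
        rw [hG, Real.mul_rpow (by positivity) hd.le, ← Real.rpow_mul h2P.le]
        congr 2
        field_simp
      have hsum2 : ∀ x ∈ X, ∀ y ∈ X, |x 1 - y 1| + |x 2 - y 2| ≤ G := by
        intro x hx y hy
        by_contra hcon
        push_neg at hcon
        have h1 : (|x 1 - y 1| + |x 2 - y 2|) ^ P
            ≤ 2 ^ (P - 1) * (|x 1 - y 1| ^ P + |x 2 - y 2| ^ P) :=
          real_rpow_add_le (abs_nonneg _) (abs_nonneg _) hP1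
        have h2 : |x 1 - y 1| ^ P + |x 2 - y 2| ^ P ≤ dist x y ^ P := by
          rw [hdistP]
          linarith [Real.rpow_nonneg (abs_nonneg (x 0 - y 0)) P]
        have h3 : dist x y ^ P ≤ d ^ P :=
          Real.rpow_le_rpow dist_nonneg (hdle x hx y hy) hP_pos.le
        have h5 : G ^ P < (|x 1 - y 1| + |x 2 - y 2|) ^ P :=
          Real.rpow_lt_rpow hG0 hcon hP_pos
        rw [hGP] at h5
        have h6 := mul_le_mul_of_nonneg_left (h2.trans h3) (Real.rpow_nonneg h2P.le (P - 1))
        linarith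
      set f : Fin 3 → PiLp p (fun _ : Fin 3 => ℝ) → ℝ :=
        ![fun x => x 0, fun x => x 1 + x 2, fun x => x 1 - x 2] with hf
      set r : Fin 3 → ℝ := ![d, G, G] with hr_def
      have hr : ∀ i, ∀ x ∈ X, ∀ y ∈ X, f i x - f i y ≤ r i := by
        intro i x hx y hy
        fin_cases i <;>
          simp only [hf, hr_def, Matrix.cons_val_zero, Matrix.cons_val_one, Matrix.head_cons,
            Matrix.cons_val_two, Matrix.tail_cons]
        · exact le_trans (le_abs_self _) ((hco x y 0).trans (hdle x hx y hy))
        · calc x 1 + x 2 - (y 1 + y 2) = (x 1 - y 1) + (x 2 - y 2) := by ring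
            _ ≤ |x 1 - y 1| + |x 2 - y 2| := add_le_add (le_abs_self _) (le_abs_self _)
            _ ≤ G := hsum2 x hx y hy
        · calc x 1 - x 2 - (y 1 - y 2) = (x 1 - y 1) - (x 2 - y 2) := by ring
            _ ≤ |x 1 - y 1| + |x 2 - y 2| := by
                have := abs_sub (x 1 - y 1) (x 2 - y 2)
                calc (x 1 - y 1) - (x 2 - y 2) ≤ |(x 1 - y 1) - (x 2 - y 2)| := le_abs_self _
                  _ ≤ |x 1 - y 1| + |x 2 - y 2| := abs_sub _ _
            _ ≤ G := hsum2 x hx y hy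
      obtain ⟨Y, hY, hprop⟩ := partition8' X hne f r hr
      set c0 := (2 : ℝ) ^ (-P) + 1/2 with hc0
      have hc0pos : 0 ≤ c0 := by positivity
      have hc0lt : c0 < 1 := by
        have hlt : (2 : ℝ) ^ (-P) < 2 ^ (-(1 : ℝ)) :=
          (Real.rpow_lt_rpow_left_iff one_lt_two).2 (by linarith)
        have he : (2 : ℝ) ^ (-(1 : ℝ)) = 1/2 := by
          rw [Real.rpow_neg h2P.le, Real.rpow_one]
          norm_num
        rw [he] at hlt
        rw [hc0]
        linarith
      set d' := d * c0 ^ (1/P) with hd'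
      have hd'lt : d' < d := mul_lt_of_lt_one_right hd
        (Real.rpow_lt_one hc0pos hc0lt (by positivity))
      refine ⟨Y, hY, fun k => lt_of_le_of_lt ?_ hd'lt⟩
      apply Metric.diam_le_of_forall_dist_le (by positivity)
      intro x hx y hy
      obtain ⟨hxX, hyX, hosc⟩ := hprop k x hx y hy
      have h0 := hosc 0
      have h1 := hosc 1
      have h2 := hosc 2
      simp only [hf, hr_def, Matrix.cons_val_zero, Matrix.cons_val_one, Matrix.head_cons,
        Matrix.cons_val_two, Matrix.tail_cons] at h0 h1 h2
      have hAB : |x 1 - y 1| + |x 2 - y 2| ≤ G / 2 := by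
        apply abs_add_abs_le' (a := x 1 - y 1) (b := x 2 - y 2)
        · convert h1 using 2
          ring
        · convert h2 using 2
          ring
      have hG2 : (G / 2) ^ P = d ^ P / 2 := by
        have e0 : G / 2 = 2 ^ (-(1/P)) * d := by
          rw [hG, show (1 - 1/P : ℝ) = -(1/P) + 1 by ring, Real.rpow_add h2P, Real.rpow_one]
          ring
        rw [e0, Real.mul_rpow (by positivity) hd.le, ← Real.rpow_mul h2P.le]
        have : (-(1/P)) * P = -1 := by field_simp
        rw [this, Real.rpow_neg h2P.le, Real.rpow_one]
        ring
      have e3 : (d/2) ^ P = d ^ P * 2 ^ (-P) := by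
        rw [div_eq_mul_inv, Real.mul_rpow hd.le (by positivity), Real.rpow_neg h2P.le,
          Real.inv_rpow h2P.le]
      have hsum : dist x y ^ P ≤ d ^ P * c0 := by
        rw [hdistP]
        have e1 : |x 0 - y 0| ^ P ≤ (d/2) ^ P :=
          Real.rpow_le_rpow (abs_nonneg _) h0 hP_pos.le
        have e2 : |x 1 - y 1| ^ P + |x 2 - y 2| ^ P ≤ (G/2) ^ P :=
          (real_add_rpow (abs_nonneg _) (abs_nonneg _) hP1).trans
            (Real.rpow_le_rpow (by positivity) hAB hP_pos.le)
        rw [e3] at e1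
        rw [hG2] at e2
        rw [hc0, mul_add]
        have : d ^ P * (1/2) = d ^ P / 2 := by ring
        rw [this]
        linarith
      by_contra hcon
      push_neg at hcon
      have h5 : d' ^ P < dist x y ^ P := Real.rpow_lt_rpow (by positivity) hcon hP_pos
      have h6 : d' ^ P = d ^ P * c0 := by
        rw [hd', Real.mul_rpow hd.le (Real.rpow_nonneg hc0pos _), ← Real.rpow_mul hc0pos,
          one_div, inv_mul_cancel₀ (ne_of_gt hP_pos), Real.rpow_one]
      linarith
end

section
/- Let 1 ≤ p ≤ ∞ and equip ℝ^n with the ℓ_p norm. Then every bounded centrally symmetric set X in this n-dimensional ℓ_p space with positive ℓ_p-diameter can be written as a union of m subsets each of ℓ_p-diameter strictly smaller than the ℓ_p-diameter of X, where m = 2n if p = 1, m = n+1 if 1 < p < ∞, and m = 2^n if p = ∞. -/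
lemma sum_abs_rpow_of_norm {n : ℕ} {p : ENNReal} [Fact (1 ≤ p)] (hq0 : 0 < p.toReal)
    (z : PiLp p (fun _ : Fin n => ℝ)) {s : ℝ} (hz : ‖z‖ = s) :
    ∑ i, |z i| ^ p.toReal = s ^ p.toReal := by
  set q := p.toReal
  have hnn : 0 ≤ ∑ i, ‖z i‖ ^ q :=
    Finset.sum_nonneg fun i _ => Real.rpow_nonneg (norm_nonneg _) _
  have h1 : (∑ i, ‖z i‖ ^ q) ^ (1 / q) = s := by rw [← PiLp.norm_eq_sum hq0]; exact hz
  have h2 : ((∑ i, ‖z i‖ ^ q) ^ (1 / q)) ^ q = s ^ q := by rw [h1]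
  rw [← Real.rpow_mul hnn, one_div, inv_mul_cancel₀ (ne_of_gt hq0), Real.rpow_one] at h2
  rw [← h2]
  exact Finset.sum_congr rfl fun i _ => by rw [Real.norm_eq_abs]

lemma lp_strict_aux {n : ℕ} {p : ENNReal} [Fact (1 ≤ p)] (hq : 1 < p.toReal)
    {x y : PiLp p (fun _ : Fin n => ℝ)} {r : ℝ}
    (hx : ‖x‖ = r) (hy : ‖y‖ = r) (hxy : ‖x + y‖ = 2 * r) : x = y := by
  set q := p.toReal with hqdef
  have hq0 : 0 < q := lt_trans one_pos hq
  have hSx : ∑ i, |x i| ^ q = r ^ q := sum_abs_rpow_of_norm hq0 x hx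
  have hSy : ∑ i, |y i| ^ q = r ^ q := sum_abs_rpow_of_norm hq0 y hy
  have hm : ‖(2:ℝ)⁻¹ • (x + y)‖ = r := by
    rw [norm_smul, hxy]
    rw [Real.norm_eq_abs, abs_of_nonneg (by norm_num : (0:ℝ) ≤ (2:ℝ)⁻¹)]
    ring
  have hSm : ∑ i, |((2:ℝ)⁻¹ • (x + y)) i| ^ q = r ^ q :=
    sum_abs_rpow_of_norm hq0 _ hm
  set A : Fin n → ℝ := fun i => |((2:ℝ)⁻¹ • (x + y)) i| ^ q with hA
  set T : Fin n → ℝ := fun i => (|x i| ^ q + |y i| ^ q) / 2 with hT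
  have hmid : ∀ i, ((2:ℝ)⁻¹ • (x + y)) i = (2:ℝ)⁻¹ * (x i + y i) := by
    intro i; rw [PiLp.smul_apply, PiLp.add_apply]; rfl
  have step1 : ∀ i, |((2:ℝ)⁻¹ • (x + y)) i| ≤ (|x i| + |y i|) / 2 := by
    intro i; rw [hmid i, abs_mul]
    rw [abs_of_nonneg (by norm_num : (0:ℝ) ≤ (2:ℝ)⁻¹)]
    calc (2:ℝ)⁻¹ * |x i + y i| ≤ (2:ℝ)⁻¹ * (|x i| + |y i|) := by
          have := abs_add_le (x i) (y i); nlinarith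
      _ = (|x i| + |y i|) / 2 := by ring
  have step2 : ∀ i, ((|x i| + |y i|) / 2) ^ q ≤ T i := by
    intro i
    have := (convexOn_rpow (le_of_lt hq)).2 (Set.mem_Ici.2 (abs_nonneg (x i)))
      (Set.mem_Ici.2 (abs_nonneg (y i))) (by norm_num : (0:ℝ) ≤ 1/2)
      (by norm_num : (0:ℝ) ≤ 1/2) (by norm_num)
    simp only [smul_eq_mul] at this
    calc ((|x i| + |y i|) / 2) ^ q = (1/2 * |x i| + 1/2 * |y i|) ^ q := by ring_nf
      _ ≤ 1/2 * |x i| ^ q + 1/2 * |y i| ^ q := this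
      _ = T i := by rw [hT]; ring
  have hAT : ∀ i, A i ≤ T i := by
    intro i
    refine le_trans ?_ (step2 i)
    exact Real.rpow_le_rpow (abs_nonneg _) (step1 i) (le_of_lt hq0)
  have hsum : ∑ i, A i = ∑ i, T i := by
    rw [hSm, hT]
    have : ∑ i, (|x i| ^ q + |y i| ^ q) / 2 = ((∑ i, |x i| ^ q) + ∑ i, |y i| ^ q) / 2 := by
      rw [Finset.sum_add_distrib.symm, Finset.sum_div]
    rw [this, hSx, hSy]; ring
  have heach : ∀ i, A i = T i :=
    fun i => (Finset.sum_eq_sum_iff_of_le (fun i _ => hAT i)).1 hsum i (Finset.mem_univ i)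
  refine PiLp.ext fun i => ?_
  have h1 : A i = ((|x i| + |y i|) / 2) ^ q := le_antisymm
    (Real.rpow_le_rpow (abs_nonneg _) (step1 i) (le_of_lt hq0))
    (by rw [heach i]; exact step2 i)
  have h2 : ((|x i| + |y i|) / 2) ^ q = T i := le_antisymm (step2 i) (by rw [← heach i, h1])
  have habs : |x i| = |y i| := by
    by_contra hne
    have := (strictConvexOn_rpow hq).2 (Set.mem_Ici.2 (abs_nonneg (x i)))
      (Set.mem_Ici.2 (abs_nonneg (y i))) hne (by norm_num : (0:ℝ) < 1/2)
      (by norm_num : (0:ℝ) < 1/2) (by norm_num)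
    simp only [smul_eq_mul] at this
    have hrw : (1/2 * |x i| + 1/2 * |y i|) = (|x i| + |y i|) / 2 := by ring
    rw [hrw, h2, hT] at this
    simp only at this
    linarith
  have hadd : |x i + y i| = |x i| + |y i| := by
    have hu : 0 ≤ |((2:ℝ)⁻¹ • (x + y)) i| := abs_nonneg _
    have hv : 0 ≤ (|x i| + |y i|) / 2 := by positivity
    have hinj : |((2:ℝ)⁻¹ • (x + y)) i| = (|x i| + |y i|) / 2 := by
      have h1' : |((2:ℝ)⁻¹ • (x + y)) i| ^ q = ((|x i| + |y i|) / 2) ^ q := h1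
      calc |((2:ℝ)⁻¹ • (x + y)) i|
          = (|((2:ℝ)⁻¹ • (x + y)) i| ^ q) ^ q⁻¹ := (Real.rpow_rpow_inv hu (ne_of_gt hq0)).symm
        _ = (((|x i| + |y i|) / 2) ^ q) ^ q⁻¹ := by rw [h1']
        _ = (|x i| + |y i|) / 2 := Real.rpow_rpow_inv hv (ne_of_gt hq0)
    rw [hmid i, abs_mul, abs_of_nonneg (by norm_num : (0:ℝ) ≤ (2:ℝ)⁻¹)] at hinj
    linarith
  rcases le_or_gt 0 (x i + y i) with hs | hs
  · rw [abs_of_nonneg hs] at hadd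
    have hx1 : x i ≤ |x i| := le_abs_self _
    have hy1 : y i ≤ |y i| := le_abs_self _
    have hxx : x i = |x i| := by linarith
    have hyy : y i = |y i| := by linarith
    rw [hxx, hyy, habs]
  · rw [abs_of_neg hs] at hadd
    have hx1 : -x i ≤ |x i| := neg_le_abs _
    have hy1 : -y i ≤ |y i| := neg_le_abs _
    have hxx : -x i = |x i| := by linarith
    have hyy : -y i = |y i| := by linarith
    linarith [habs, hxx, hyy]

set_option maxHeartbeats 1000000 in
/-- Yu–Zong: in the n-dimensional ℓ_p space (1 ≤ p ≤ ∞), every bounded centrally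
symmetric set of positive diameter can be written as a union of m subsets, each of
ℓ_p-diameter strictly smaller than that of X, where m = 2n if p = 1, m = n+1 if
1 < p < ∞, and m = 2^n if p = ∞. -/
theorem borsuk_lp_centrally_symmetric (n : ℕ) (p : ENNReal) [Fact (1 ≤ p)]
    (X : Set (PiLp p (fun _ : Fin n => ℝ))) (hX : Bornology.IsBounded X)
    (hd : 0 < Metric.diam X)
    (hsymm : ∃ c : PiLp p (fun _ : Fin n => ℝ), ∀ x ∈ X, (2 : ℝ) • c - x ∈ X) :
    ∃ Y : Fin (if p = 1 then 2 * n else if p = ⊤ then 2 ^ n else n + 1) →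
        Set (PiLp p (fun _ : Fin n => ℝ)),
      X = ⋃ i, Y i ∧ ∀ i, Metric.diam (Y i) < Metric.diam X := by
  obtain ⟨c, hc⟩ := hsymm
  have hd0 : (0:ℝ) ≤ Metric.diam X := Metric.diam_nonneg
  rcases Nat.eq_zero_or_pos n with hn0 | hn
  · exfalso
    subst hn0
    have hsub : X.Subsingleton := by
      intro a _ b _
      apply (WithLp.equiv p _).injective
      funext i
      exact i.elim0
    exact absurd (Metric.diam_subsingleton hsub) (ne_of_gt hd)
  have hrad : ∀ x ∈ X, dist x c ≤ Metric.diam X / 2 := by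
    intro x hx
    have h1 : dist x ((2:ℝ) • c - x) ≤ Metric.diam X :=
      Metric.dist_le_diam_of_mem hX hx (hc x hx)
    have h2 : dist x ((2:ℝ) • c - x) = 2 * dist x c := by
      rw [dist_eq_norm, dist_eq_norm]
      have hxx : x - ((2:ℝ) • c - x) = (2:ℝ) • (x - c) := by
        rw [smul_sub, two_smul, two_smul]; abel
      rw [hxx, norm_smul, Real.norm_eq_abs, abs_of_nonneg (by norm_num : (0:ℝ) ≤ 2)]
    linarith
  set d := Metric.diam X with hdd
  by_cases hp1 : p = 1
  · subst hp1
    rw [if_pos rfl]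
    haveI : Nonempty (Fin n) := Fin.pos_iff_nonempty.1 hn
    set N : ℝ := (n : ℝ) with hNdef
    have hn' : 1 ≤ n := hn
    have hN1 : (1:ℝ) ≤ N := by rw [hNdef]; exact_mod_cast hn'
    have hN0 : (0:ℝ) < N := by linarith
    have hdist : ∀ u v : PiLp 1 (fun _ : Fin n => ℝ), dist u v = ∑ i, |u i - v i| := by
      intro u v
      rw [PiLp.dist_eq_sum (by norm_num : 0 < (1:ENNReal).toReal)]
      simp [Real.dist_eq, Real.rpow_one]
    have hidx : ∀ k : Fin (2 * n), (k : ℕ) % n < n := fun k => Nat.mod_lt _ hn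
    set ε : Fin (2 * n) → ℝ := fun k => if (k : ℕ) < n then 1 else -1 with hε
    set idx : Fin (2 * n) → Fin n := fun k => ⟨(k : ℕ) % n, hidx k⟩ with hidxdef
    refine ⟨fun k => {x | x ∈ X ∧ dist x c ≤ N * (ε k * (x (idx k) - c (idx k)))}, ?_, ?_⟩
    · apply Set.Subset.antisymm
      · intro x hx
        have hex : ∃ i : Fin n, dist x c ≤ N * |x i - c i| := by
          by_contra hcon
          push_neg at hcon
          have hxsum : dist x c = ∑ i, |x i - c i| := hdist x c
          have hlt : ∑ i : Fin n, |x i - c i| < ∑ _i : Fin n, dist x c / N := by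
            apply Finset.sum_lt_sum_of_nonempty Finset.univ_nonempty
            intro i _
            rw [lt_div_iff₀ hN0]
            have hin := hcon i
            rw [mul_comm] at hin
            exact hin
          have hconst : ∑ _i : Fin n, dist x c / N = dist x c := by
            rw [Finset.sum_const, Finset.card_univ, Fintype.card_fin, nsmul_eq_mul]
            field_simp
            rw [hNdef, mul_comm]
          linarith
        obtain ⟨i, hi⟩ := hex
        rcases le_or_gt 0 (x i - c i) with hpos | hneg
        · refine Set.mem_iUnion.2 ⟨⟨(i:ℕ), by omega⟩, hx, ?_⟩
          have hεk : ε ⟨(i:ℕ), by omega⟩ = 1 := if_pos i.2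
          have hik : idx ⟨(i:ℕ), by omega⟩ = i := Fin.ext (Nat.mod_eq_of_lt i.2)
          rw [hεk, hik, one_mul]
          rwa [abs_of_nonneg hpos] at hi
        · refine Set.mem_iUnion.2 ⟨⟨n + (i:ℕ), by omega⟩, hx, ?_⟩
          have hεk : ε ⟨n + (i:ℕ), by omega⟩ = -1 := if_neg (by simp)
          have hik : idx ⟨n + (i:ℕ), by omega⟩ = i := by
            apply Fin.ext
            show (n + (i:ℕ)) % n = (i:ℕ)
            rw [Nat.add_mod_left]
            exact Nat.mod_eq_of_lt i.2
          rw [hεk, hik, neg_one_mul]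
          rwa [abs_of_neg hneg] at hi
      · exact Set.iUnion_subset fun k x hx => hx.1
    · intro k
      have hiN0 : (0:ℝ) ≤ N⁻¹ := inv_nonneg.2 hN0.le
      have hiN : N * N⁻¹ = 1 := mul_inv_cancel₀ (ne_of_gt hN0)
      have hiN1 : N⁻¹ ≤ 1 := by nlinarith [mul_nonneg (sub_nonneg.2 hN1) hiN0]
      have hiNpos : (0:ℝ) < N⁻¹ := inv_pos.2 hN0
      have hB0 : (0:ℝ) ≤ d - d * N⁻¹ / 2 := by nlinarith [mul_nonneg hd0 hiN0]
      have hBlt : d - d * N⁻¹ / 2 < d := by nlinarith [mul_pos hd hiNpos]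
      refine lt_of_le_of_lt ?_ hBlt
      apply Metric.diam_le_of_forall_dist_le hB0
      rintro x ⟨hxX, hxk⟩ y ⟨hyX, hyk⟩
      set i := idx k with hi
      set ek := ε k with hek
      have he1 : ek = 1 ∨ ek = -1 := by
        rw [hek, hε]; dsimp only; split_ifs; exacts [Or.inl rfl, Or.inr rfl]
      have habs : ∀ t : ℝ, |ek * t| = |t| := by
        intro t; rcases he1 with h | h <;> rw [h] <;> simp
      set α := ek * (x i - c i) with hαdef
      set β := ek * (y i - c i) with hβdef
      have hdxc : (0:ℝ) ≤ dist x c := dist_nonneg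
      have hdyc : (0:ℝ) ≤ dist y c := dist_nonneg
      have hα0 : 0 ≤ α := by nlinarith [le_trans hdxc hxk]
      have hβ0 : 0 ≤ β := by nlinarith [le_trans hdyc hyk]
      have hxa : |x i - c i| = α := by rw [← habs (x i - c i)]; exact abs_of_nonneg hα0
      have hya : |y i - c i| = β := by rw [← habs (y i - c i)]; exact abs_of_nonneg hβ0
      have hsx : |x i - c i| + ∑ j ∈ Finset.univ.erase i, |x j - c j| = dist x c := by
        rw [hdist x c]
        exact Finset.add_sum_erase _ (fun j => |x j - c j|) (Finset.mem_univ i)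
      have hsy : |y i - c i| + ∑ j ∈ Finset.univ.erase i, |y j - c j| = dist y c := by
        rw [hdist y c]
        exact Finset.add_sum_erase _ (fun j => |y j - c j|) (Finset.mem_univ i)
      have hterm : ∑ j ∈ Finset.univ.erase i, |x j - y j| ≤
          (∑ j ∈ Finset.univ.erase i, |x j - c j|) + ∑ j ∈ Finset.univ.erase i, |y j - c j| := by
        rw [← Finset.sum_add_distrib]
        apply Finset.sum_le_sum
        intro j _
        have h := abs_sub_le (x j) (c j) (y j)
        rwa [abs_sub_comm (c j) (y j)] at h
      have hixy : |x i - y i| ≤ α + β - 2 * min α β := by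
        have h1 : |x i - y i| = |α - β| := by
          have h2 : α - β = ek * (x i - y i) := by rw [hαdef, hβdef]; ring
          rw [h2, habs]
        rw [h1]
        rcases le_total α β with h | h
        · rw [min_eq_left h, abs_of_nonpos (by linarith)]; linarith
        · rw [min_eq_right h, abs_of_nonneg (by linarith)]; linarith
      have hbound : dist x y ≤ dist x c + dist y c - 2 * min α β := by
        have e1 : dist x y = |x i - y i| + ∑ j ∈ Finset.univ.erase i, |x j - y j| := by
          rw [hdist x y, ← Finset.add_sum_erase _ (fun j => |x j - y j|) (Finset.mem_univ i)]
        rw [e1]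
        linarith
      have hxd : dist x c ≤ d / 2 := hrad x hxX
      have hyd : dist y c ≤ d / 2 := hrad y hyX
      rcases le_total α β with hmin | hmin
      · rw [min_eq_left hmin] at hbound
        have hα' : dist x c * N⁻¹ ≤ α :=
          calc dist x c * N⁻¹ ≤ (N * α) * N⁻¹ := mul_le_mul_of_nonneg_right hxk hiN0
            _ = α * (N * N⁻¹) := by ring
            _ = α := by rw [hiN, mul_one]
        rcases le_total (N⁻¹) (1/2) with hhalf | hhalf
        · nlinarith [mul_nonneg (sub_nonneg.2 hxd) (sub_nonneg.2 (by linarith : 2*N⁻¹ ≤ 1)),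
            mul_nonneg hd0 hiN0]
        · nlinarith [mul_nonneg hdxc (sub_nonneg.2 (by linarith : (1:ℝ)/2 ≤ N⁻¹)),
            mul_nonneg hd0 (sub_nonneg.2 hiN1)]
      · rw [min_eq_right hmin] at hbound
        have hβ' : dist y c * N⁻¹ ≤ β :=
          calc dist y c * N⁻¹ ≤ (N * β) * N⁻¹ := mul_le_mul_of_nonneg_right hyk hiN0
            _ = β * (N * N⁻¹) := by ring
            _ = β := by rw [hiN, mul_one]
        rcases le_total (N⁻¹) (1/2) with hhalf | hhalf
        · nlinarith [mul_nonneg (sub_nonneg.2 hyd) (sub_nonneg.2 (by linarith : 2*N⁻¹ ≤ 1)),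
            mul_nonneg hd0 hiN0]
        · nlinarith [mul_nonneg hdyc (sub_nonneg.2 (by linarith : (1:ℝ)/2 ≤ N⁻¹)),
            mul_nonneg hd0 (sub_nonneg.2 hiN1)]
  by_cases hpt : p = ⊤
  · subst hpt
    rw [if_neg hp1, if_pos rfl]
    set e : (Fin n → Fin 2) ≃ Fin (2 ^ n) := finFunctionFinEquiv with he
    refine ⟨fun k => {x | x ∈ X ∧ ∀ i, if e.symm k i = 0 then x i ≤ c i else c i ≤ x i},
      ?_, ?_⟩
    · apply Set.Subset.antisymm
      · intro x hx
        refine Set.mem_iUnion.2 ⟨e (fun i => if x i ≤ c i then 0 else 1), hx, ?_⟩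
        intro i
        rw [Equiv.symm_apply_apply]
        by_cases hxi : x i ≤ c i
        · simp only [if_pos hxi]
          exact hxi
        · have : (if x i ≤ c i then (0 : Fin 2) else 1) = 1 := if_neg hxi
          rw [this]
          simp only [Fin.one_eq_zero_iff, OfNat.ofNat_ne_one, if_false]
          exact le_of_not_ge hxi
      · exact Set.iUnion_subset fun k x hx => hx.1
    · intro k
      have hYd : Metric.diam {x | x ∈ X ∧ ∀ i, if e.symm k i = 0 then x i ≤ c i
          else c i ≤ x i} ≤ d / 2 := by
        apply Metric.diam_le_of_forall_dist_le (by linarith)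
        intro x hx y hy
        rw [PiLp.dist_eq_iSup]
        refine Real.iSup_le (fun i => ?_) (by linarith)
        have hxc : |x i - c i| ≤ d / 2 := by
          rw [← Real.dist_eq]
          refine le_trans ?_ (hrad x hx.1)
          rw [PiLp.dist_eq_iSup]
          exact le_ciSup (f := fun j => dist (x j) (c j)) (Set.Finite.bddAbove (Set.finite_range _)) i
        have hyc : |y i - c i| ≤ d / 2 := by
          rw [← Real.dist_eq]
          refine le_trans ?_ (hrad y hy.1)
          rw [PiLp.dist_eq_iSup]
          exact le_ciSup (f := fun j => dist (y j) (c j)) (Set.Finite.bddAbove (Set.finite_range _)) i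
        have hx2 := hx.2 i
        have hy2 := hy.2 i
        rw [abs_le] at hxc hyc
        rw [Real.dist_eq, abs_le]
        by_cases h0 : e.symm k i = 0
        · rw [if_pos h0] at hx2 hy2
          constructor <;> linarith [hxc.1, hxc.2, hyc.1, hyc.2]
        · rw [if_neg h0] at hx2 hy2
          constructor <;> linarith [hxc.1, hxc.2, hyc.1, hyc.2]
      linarith
  · rw [if_neg hp1, if_neg hpt]
    haveI : Nonempty (Fin n) := Fin.pos_iff_nonempty.1 hn
    have hn' : 1 ≤ n := hn
    set N : ℝ := (n : ℝ) with hNdef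
    have hN1 : (1:ℝ) ≤ N := by rw [hNdef]; exact_mod_cast hn'
    have hN0 : (0:ℝ) < N := by linarith
    have h2N : (0:ℝ) < 2 * N := by linarith
    have hplt : 1 < p := lt_of_le_of_ne Fact.out (Ne.symm hp1)
    have hq : 1 < p.toReal := by
      rw [← ENNReal.toReal_one]
      exact ENNReal.toReal_strict_mono hpt hplt
    set f : Fin (n + 1) → PiLp p (fun _ : Fin n => ℝ) → ℝ :=
      fun k => Fin.lastCases (fun a => -∑ j, a j)
        (fun i (a : PiLp p (fun _ : Fin n => ℝ)) => a i) k with hf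
    set g : PiLp p (fun _ : Fin n => ℝ) → ℝ :=
      fun a => ‖(WithLp.equiv p (Fin n → ℝ)) a‖ / (2 * N) with hg
    have hfc : ∀ k, Continuous (f k) := by
      intro k
      induction k using Fin.lastCases with
      | last =>
        simp only [hf, Fin.lastCases_last]
        exact (continuous_finset_sum _ fun j _ =>
          (continuous_apply j).comp (PiLp.continuous_ofLp p _)).neg
      | cast i =>
        simp only [hf, Fin.lastCases_castSucc]
        exact (continuous_apply i).comp (PiLp.continuous_ofLp p _)
    have hgc : Continuous g := by
      simp only [hg]
      exact ((PiLp.continuous_ofLp p _).norm).div_const _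
    have hg0 : ∀ a, 0 ≤ g a := by
      intro a
      simp only [hg]
      exact div_nonneg (norm_nonneg _) (by linarith)
    have hneg : ∀ (k) (a : PiLp p (fun _ : Fin n => ℝ)), f k (-a) = -f k a := by
      intro k a
      induction k using Fin.lastCases with
      | last =>
        simp only [hf, Fin.lastCases_last]
        simp [PiLp.neg_apply, Finset.sum_neg_distrib]
      | cast i =>
        simp [hf, Fin.lastCases_castSucc, PiLp.neg_apply]
    have hcov : ∀ a : PiLp p (fun _ : Fin n => ℝ), ∃ k, g a ≤ f k a := by
      intro a
      by_cases hex : ∃ i : Fin n, ‖(WithLp.equiv p (Fin n → ℝ)) a‖ / (2 * N) ≤ a i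
      · obtain ⟨i, hi⟩ := hex
        refine ⟨i.castSucc, ?_⟩
        simpa only [hg, hf, Fin.lastCases_castSucc] using hi
      · push_neg at hex
        refine ⟨Fin.last n, ?_⟩
        simp only [hg, hf, Fin.lastCases_last]
        set M := ‖(WithLp.equiv p (Fin n → ℝ)) a‖ with hMdef
        have hM0 : (0:ℝ) ≤ M := norm_nonneg _
        obtain ⟨j, -, hj⟩ :=
          Finset.exists_max_image Finset.univ (fun i => |a i|) Finset.univ_nonempty
        have hMj : M ≤ |a j| := by
          rw [hMdef]
          apply (pi_norm_le_iff_of_nonneg (abs_nonneg (a j))).2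
          intro i
          simpa [Real.norm_eq_abs] using hj i (Finset.mem_univ i)
        have haj : a j ≤ -M := by
          rcases le_or_gt 0 (a j) with h | h
          · exfalso
            have h1 : M ≤ a j := by rwa [abs_of_nonneg h] at hMj
            have h2 := (lt_div_iff₀ h2N).1 (hex j)
            nlinarith [mul_nonneg h (by linarith : (0:ℝ) ≤ 2 * N - 1)]
          · rw [abs_of_neg h] at hMj; linarith
        have hsum : ∑ i, a i ≤ a j + ((n - 1 : ℕ) : ℝ) * (M / (2 * N)) := by
          rw [← Finset.add_sum_erase _ (fun i => a i) (Finset.mem_univ j)]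
          have hle : ∑ i ∈ Finset.univ.erase j, a i ≤
              (Finset.univ.erase j).card • (M / (2 * N)) :=
            Finset.sum_le_card_nsmul _ _ _ fun i _ => le_of_lt (hex i)
          rw [Finset.card_erase_of_mem (Finset.mem_univ j), Finset.card_univ,
            Fintype.card_fin, nsmul_eq_mul] at hle
          linarith
        have hcard : ((n - 1 : ℕ) : ℝ) = N - 1 := by
          rw [hNdef, Nat.cast_sub hn']
          norm_num
        rw [hcard] at hsum
        set μ := M / (2 * N) with hμdef
        have hμ0 : (0:ℝ) ≤ μ := div_nonneg hM0 (by linarith)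
        have hμM : μ * (2 * N) = M := div_mul_cancel₀ M (ne_of_gt h2N)
        nlinarith [hsum, hμM, mul_nonneg (le_of_lt hN0) hμ0, haj]
    set Z : Fin (n + 1) → Set (PiLp p (fun _ : Fin n => ℝ)) :=
      fun k => Metric.closedBall c (d / 2) ∩ {z | g (z - c) ≤ f k (z - c)} with hZ
    have hZcomp : ∀ k, IsCompact (Z k) := by
      intro k
      apply (isCompact_closedBall c (d / 2)).inter_right
      have hset : {z | g (z - c) ≤ f k (z - c)} =
          (fun z => f k (z - c) - g (z - c)) ⁻¹' Set.Ici 0 := by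
        ext z; simp [sub_nonneg]
      rw [hset]
      exact IsClosed.preimage (((hfc k).comp (continuous_id.sub continuous_const)).sub
        (hgc.comp (continuous_id.sub continuous_const))) isClosed_Ici
    have hZdle : ∀ k, ∀ u ∈ Z k, ∀ v ∈ Z k, dist u v ≤ d := by
      intro k u hu v hv
      have hu' : dist u c ≤ d / 2 := Metric.mem_closedBall.1 hu.1
      have hv' : dist v c ≤ d / 2 := Metric.mem_closedBall.1 hv.1
      calc dist u v ≤ dist u c + dist c v := dist_triangle u c v
        _ = dist u c + dist v c := by rw [dist_comm c v]
        _ ≤ d := by linarith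
    have hZd : ∀ k, Metric.diam (Z k) < d := by
      intro k
      rcases Set.eq_empty_or_nonempty (Z k) with he | hne
      · rw [he, Metric.diam_empty]; exact hd
      obtain ⟨w, hw, hmax⟩ := ((hZcomp k).prod (hZcomp k)).exists_isMaxOn (hne.prod hne)
        continuous_dist.continuousOn
      obtain ⟨u, v⟩ := w
      obtain ⟨hu, hv⟩ := hw
      have hdiam_le : Metric.diam (Z k) ≤ dist u v := by
        apply Metric.diam_le_of_forall_dist_le dist_nonneg
        intro a ha b hb
        exact isMaxOn_iff.1 hmax (a, b) (Set.mk_mem_prod ha hb)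
      rcases lt_or_ge (dist u v) d with hlt | hge
      · exact lt_of_le_of_lt hdiam_le hlt
      · exfalso
        have hle := hZdle k u hu v hv
        have hduv : dist u v = d := le_antisymm hle hge
        have hu' : dist u c ≤ d / 2 := Metric.mem_closedBall.1 hu.1
        have hv' : dist v c ≤ d / 2 := Metric.mem_closedBall.1 hv.1
        have htri : dist u v ≤ dist u c + dist v c := by
          calc dist u v ≤ dist u c + dist c v := dist_triangle u c v
            _ = dist u c + dist v c := by rw [dist_comm c v]
        have huc : dist u c = d / 2 := by linarith
        have hvc : dist v c = d / 2 := by linarith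
        have hx : ‖u - c‖ = d / 2 := by rw [← dist_eq_norm]; exact huc
        have hy : ‖c - v‖ = d / 2 := by
          rw [← dist_eq_norm, dist_comm]; exact hvc
        have hxy : ‖u - c + (c - v)‖ = 2 * (d / 2) := by
          rw [sub_add_sub_cancel, ← dist_eq_norm, hduv]; ring
        have heq : u - c = c - v := lp_strict_aux hq hx hy hxy
        have hvc2 : v - c = -(u - c) := by rw [heq]; abel
        have hfu := hu.2
        have hfv := hv.2
        simp only [Set.mem_setOf_eq] at hfu hfv
        rw [hvc2, hneg k (u - c)] at hfv
        have hne0 : u - c ≠ 0 := by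
          intro h0
          rw [h0, norm_zero] at hx
          linarith
        have hgpos : 0 < g (u - c) := by
          simp only [hg]
          apply div_pos _ h2N
          rw [norm_pos_iff]
          intro hc0
          exact hne0 ((WithLp.equiv p _).injective hc0)
        have hg2 := hg0 (-(u - c))
        linarith
    refine ⟨fun k => X ∩ Z k, ?_, ?_⟩
    · apply Set.Subset.antisymm
      · intro x hx
        obtain ⟨k, hk⟩ := hcov (x - c)
        exact Set.mem_iUnion.2 ⟨k, hx, Metric.mem_closedBall.2 (hrad x hx), hk⟩
      · exact Set.iUnion_subset fun k => Set.inter_subset_left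
    · intro k
      exact lt_of_le_of_lt
        (Metric.diam_mono Set.inter_subset_right (hZcomp k).isBounded) (hZd k)
end
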